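/- Let X be a metric space with a convex-like structure. For u,v ∈ X and α,β ∈ (0,1), d(γ_{α,1−α}(u,v), γ_{β,1−β}(u,v)) ≤ |β−α|·d(u,v), where γ_{λ,1−λ}(u,v) denotes the two-point combination with weights (λ,1−λ). In particular, λ ↦ γ_{λ,1−λ}(u,v) is Lipschitz continuous on (0,1). -/

import Mathlib

open scoped BigOperators
open Filter MeasureTheory

/-- A convex combination space (Terán–Molchanov): a metric space with an
`n`-ary convex combination operation for positive weights summing to `1`. -/
structure CCSpace (X : Type) [MetricSpace X] where
  /-- the convex combination operation `[w 0, u 0; …; w (n-1), u (n-1)]` -/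
  comb : ∀ {n : ℕ}, (Fin n → ℝ) → (Fin n → X) → X
  /-- the convexification operator -/
  K : X → X
  comb_single : ∀ u : X, comb (fun _ : Fin 1 => (1 : ℝ)) (fun _ => u) = u
  /-- (CC.i) commutativity -/
  comb_perm : ∀ {n : ℕ} (w : Fin n → ℝ) (u : Fin n → X) (σ : Equiv.Perm (Fin n)),
    (∀ i, 0 < w i) → (∑ i, w i) = 1 → comb w u = comb (w ∘ σ) (u ∘ σ)
  /-- (CC.ii) associativity: the last two terms may be combined first -/
  comb_assoc : ∀ {n : ℕ} (w : Fin (n + 2) → ℝ) (u : Fin (n + 2) → X),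
    (∀ i, 0 < w i) → (∑ i, w i) = 1 →
    comb w u =
      comb
        (Fin.snoc (fun i : Fin n => w (Fin.castLE (by omega) i))
          (w ⟨n, by omega⟩ + w ⟨n + 1, by omega⟩))
        (Fin.snoc (fun i : Fin n => u (Fin.castLE (by omega) i))
          (comb
            ![w ⟨n, by omega⟩ / (w ⟨n, by omega⟩ + w ⟨n + 1, by omega⟩),
              w ⟨n + 1, by omega⟩ / (w ⟨n, by omega⟩ + w ⟨n + 1, by omega⟩)]
            ![u ⟨n, by omega⟩, u ⟨n + 1, by omega⟩]))
  /-- (CC.iii) continuity in the weight -/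
  comb_cont : ∀ u v : X,
    ContinuousOn (fun t : ℝ => comb ![t, 1 - t] ![u, v]) (Set.Ioo (0 : ℝ) 1)
  /-- (CC.iv) negative curvature -/
  comb_nc : ∀ {n : ℕ} (w : Fin n → ℝ) (u v : Fin n → X),
    (∀ i, 0 < w i) → (∑ i, w i) = 1 →
    dist (comb w u) (comb w v) ≤ ∑ i, w i * dist (u i) (v i)
  /-- (CC.v) convexification: `[n⁻¹, u]ᵢ₌₁ⁿ → K u` -/
  tendsto_K : ∀ u : X,
    Tendsto (fun n : ℕ => comb (fun _ : Fin n => (n : ℝ)⁻¹) (fun _ => u))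
      atTop (nhds (K u))

namespace CCSpace

variable {X : Type} [MetricSpace X] (S : CCSpace X)

/-- The convexifiable domain `K(X)`: the set of convex points. -/
def KX : Set X := {u : X | S.K u = u}

/-- Binary convex combination with weights in `[0,1]`, extended to the endpoints
by discarding the zero-weight term. -/
noncomputable def comb2 (t : ℝ) (x y : X) : X :=
  if t = 0 then y else if t = 1 then x else S.comb ![t, 1 - t] ![x, y]

/-- Convex combination for nonnegative weights summing to `1`, defined by
discarding the zero-weight terms. -/
noncomputable def combE {n : ℕ} (w : Fin n → ℝ) (u : Fin n → X) : X :=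
  letI : DecidablePred fun i : Fin n => w i ≠ 0 := Classical.decPred _
  S.comb (fun j => w ((Fintype.equivFin {i : Fin n // w i ≠ 0}).symm j))
    (fun j => u ((Fintype.equivFin {i : Fin n // w i ≠ 0}).symm j))

/-- A function is affine if it commutes with all convex combinations. -/
def IsAffine (f : X → ℝ) : Prop :=
  ∀ ⦃n : ℕ⦄ (w : Fin n → ℝ) (x : Fin n → X), (∀ i, 0 < w i) → (∑ i, w i) = 1 →
    f (S.comb w x) = ∑ i, w i * f (x i)

/-- Midpoint convexity. -/
def MidpointConvex (φ : X → ℝ) : Prop :=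
  ∀ x y : X, φ (S.comb ![(1 : ℝ) / 2, 1 / 2] ![x, y]) ≤ (φ x + φ y) / 2

end CCSpace

/-- A convex-like structure (Brown / Capraro–Fritz) on a metric space. -/
structure ConvexLike (X : Type) [MetricSpace X] where
  /-- for each probability vector `μ` on `Fin n`, a combination map `γ_μ : Xⁿ → X` -/
  γ : ∀ {n : ℕ}, (Fin n → ℝ) → (Fin n → X) → X
  /-- each `γ_μ` is continuous -/
  γ_continuous : ∀ {n : ℕ} (w : Fin n → ℝ), (∀ i, 0 ≤ w i) → (∑ i, w i) = 1 →
    Continuous fun u : Fin n → X => γ w u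
  /-- (γ.1) permutation invariance -/
  γ_perm : ∀ {n : ℕ} (w : Fin n → ℝ) (u : Fin n → X) (σ : Equiv.Perm (Fin n)),
    (∀ i, 0 ≤ w i) → (∑ i, w i) = 1 → γ w u = γ (w ∘ σ) (u ∘ σ)
  /-- (γ.2) merging of equal arguments -/
  γ_merge : ∀ {n : ℕ} (w : Fin (n + 2) → ℝ) (u : Fin (n + 2) → X),
    (∀ i, 0 ≤ w i) → (∑ i, w i) = 1 → u 0 = u 1 →
    γ w u =
      γ (Fin.cons (w 0 + w 1) fun i : Fin n => w i.succ.succ)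
        (Fin.cons (u 0) fun i : Fin n => u i.succ.succ)
  /-- (γ.3) projection when some weight equals `1` -/
  γ_proj : ∀ {n : ℕ} (w : Fin n → ℝ) (u : Fin n → X) (i : Fin n),
    (∀ i, 0 ≤ w i) → (∑ i, w i) = 1 → w i = 1 → γ w u = u i
  /-- (γ.4) Lipschitz estimate -/
  γ_lip : ∀ {n : ℕ} (w : Fin n → ℝ) (u v : Fin n → X),
    (∀ i, 0 ≤ w i) → (∑ i, w i) = 1 →
    dist (γ w u) (γ w v) ≤ ∑ i, w i * dist (u i) (v i)
  /-- (γ.5) compatibility of nested combinations -/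
  γ_nested : ∀ {n m : ℕ} (ν : Fin 2 → ℝ) (w₁ : Fin n → ℝ) (w₂ : Fin m → ℝ)
    (x : Fin n → X) (y : Fin m → X),
    (∀ i, 0 ≤ ν i) → (∑ i, ν i) = 1 →
    (∀ i, 0 ≤ w₁ i) → (∑ i, w₁ i) = 1 →
    (∀ i, 0 ≤ w₂ i) → (∑ i, w₂ i) = 1 →
    γ ν ![γ w₁ x, γ w₂ y] =
      γ (Fin.append (fun i => ν 0 * w₁ i) (fun j => ν 1 * w₂ j)) (Fin.append x y)

namespace ConvexLikeAux

variable {X : Type} [MetricSpace X] (Γ : ConvexLike X)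

lemma merge2 (t : ℝ) (ht0 : 0 ≤ t) (ht1 : t ≤ 1) (x : X) :
    Γ.γ ![t, 1 - t] ![x, x] = x := by
  have hnn : ∀ i, 0 ≤ (![t, 1 - t] : Fin 2 → ℝ) i := by
    intro i; fin_cases i <;> simp <;> linarith
  have hsum : (∑ i, (![t, 1 - t] : Fin 2 → ℝ) i) = 1 := by
    simp [Fin.sum_univ_two]
  have h := Γ.γ_merge (n := 0) ![t, 1 - t] ![x, x] hnn hsum rfl
  rw [h]
  apply Γ.γ_proj _ _ 0
  · intro i
    fin_cases i
    simp
  · simp [Fin.sum_univ_one]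
  · simp

lemma four_pt (w : Fin 4 → ℝ) (hw : ∀ i, 0 ≤ w i) (hs : (∑ i, w i) = 1) (u v : X) :
    Γ.γ w ![u, v, u, v] = Γ.γ ![w 0 + w 2, w 1 + w 3] ![u, v] := by
  have hs4 : w 0 + w 1 + w 2 + w 3 = 1 := by
    have := hs; rw [Fin.sum_univ_four] at this; linarith
  -- Step 1: permute with swap 1 2
  have h1 := Γ.γ_perm w ![u, v, u, v] (Equiv.swap 1 2) hw hs
  have hw1 : (w ∘ (Equiv.swap (1 : Fin 4) 2)) = ![w 0, w 2, w 1, w 3] := by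
    funext i; fin_cases i <;> simp [Equiv.swap_apply_def]
  have hu1 : ((![u, v, u, v] : Fin 4 → X) ∘ (Equiv.swap (1 : Fin 4) 2)) = ![u, u, v, v] := by
    funext i; fin_cases i <;> simp [Equiv.swap_apply_def]
  rw [hw1, hu1] at h1
  -- Step 2: merge the two u's
  have hnn2 : ∀ i, 0 ≤ (![w 0, w 2, w 1, w 3] : Fin 4 → ℝ) i := by
    intro i; fin_cases i <;> simpa using hw _
  have hsum2 : (∑ i, (![w 0, w 2, w 1, w 3] : Fin 4 → ℝ) i) = 1 := by
    rw [Fin.sum_univ_four]; simpa using by linarith [hs4]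
  have h2 := Γ.γ_merge (n := 2) ![w 0, w 2, w 1, w 3] ![u, u, v, v] hnn2 hsum2 rfl
  have hw2 : (Fin.cons ((![w 0, w 2, w 1, w 3] : Fin 4 → ℝ) 0 + (![w 0, w 2, w 1, w 3] : Fin 4 → ℝ) 1)
      (fun i : Fin 2 => (![w 0, w 2, w 1, w 3] : Fin 4 → ℝ) i.succ.succ) : Fin 3 → ℝ)
      = ![w 0 + w 2, w 1, w 3] := by
    funext i; fin_cases i <;> rfl
  have hu2 : (Fin.cons ((![u, u, v, v] : Fin 4 → X) 0)
      (fun i : Fin 2 => (![u, u, v, v] : Fin 4 → X) i.succ.succ) : Fin 3 → X)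
      = ![u, v, v] := by
    funext i; fin_cases i <;> rfl
  rw [hw2, hu2] at h2
  -- Step 3: permute with finRotate 3
  have hnn3 : ∀ i, 0 ≤ (![w 0 + w 2, w 1, w 3] : Fin 3 → ℝ) i := by
    intro i; fin_cases i <;> simp <;> [linarith [hw 0, hw 2]; exact hw 1; exact hw 3]
  have hsum3 : (∑ i, (![w 0 + w 2, w 1, w 3] : Fin 3 → ℝ) i) = 1 := by
    rw [Fin.sum_univ_three]; simpa using by linarith [hs4]
  have h3 := Γ.γ_perm ![w 0 + w 2, w 1, w 3] ![u, v, v] (finRotate 3) hnn3 hsum3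
  have hw3 : ((![w 0 + w 2, w 1, w 3] : Fin 3 → ℝ) ∘ (finRotate 3)) = ![w 1, w 3, w 0 + w 2] := by
    funext i; fin_cases i <;> rfl
  have hu3 : ((![u, v, v] : Fin 3 → X) ∘ (finRotate 3)) = ![v, v, u] := by
    funext i; fin_cases i <;> rfl
  rw [hw3, hu3] at h3
  -- Step 4: merge the two v's
  have hnn4 : ∀ i, 0 ≤ (![w 1, w 3, w 0 + w 2] : Fin 3 → ℝ) i := by
    intro i; fin_cases i <;> simp <;> [exact hw 1; exact hw 3; linarith [hw 0, hw 2]]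
  have hsum4 : (∑ i, (![w 1, w 3, w 0 + w 2] : Fin 3 → ℝ) i) = 1 := by
    simp [Fin.sum_univ_three]; linarith [hs4]
  have h4 := Γ.γ_merge (n := 1) ![w 1, w 3, w 0 + w 2] ![v, v, u] hnn4 hsum4 rfl
  have hw4 : (Fin.cons ((![w 1, w 3, w 0 + w 2] : Fin 3 → ℝ) 0 + (![w 1, w 3, w 0 + w 2] : Fin 3 → ℝ) 1)
      (fun i : Fin 1 => (![w 1, w 3, w 0 + w 2] : Fin 3 → ℝ) i.succ.succ) : Fin 2 → ℝ)
      = ![w 1 + w 3, w 0 + w 2] := by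
    funext i; fin_cases i <;> rfl
  have hu4 : (Fin.cons ((![v, v, u] : Fin 3 → X) 0)
      (fun i : Fin 1 => (![v, v, u] : Fin 3 → X) i.succ.succ) : Fin 2 → X)
      = ![v, u] := by
    funext i; fin_cases i <;> rfl
  rw [hw4, hu4] at h4
  -- Step 5: final swap
  have hnn5 : ∀ i, 0 ≤ (![w 1 + w 3, w 0 + w 2] : Fin 2 → ℝ) i := by
    intro i; fin_cases i <;> simp <;> [linarith [hw 1, hw 3]; linarith [hw 0, hw 2]]
  have hsum5 : (∑ i, (![w 1 + w 3, w 0 + w 2] : Fin 2 → ℝ) i) = 1 := by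
    simp [Fin.sum_univ_two]; linarith [hs4]
  have h5 := Γ.γ_perm ![w 1 + w 3, w 0 + w 2] ![v, u] (Equiv.swap 0 1) hnn5 hsum5
  have hw5 : ((![w 1 + w 3, w 0 + w 2] : Fin 2 → ℝ) ∘ (Equiv.swap (0 : Fin 2) 1)) = ![w 0 + w 2, w 1 + w 3] := by
    funext i; fin_cases i <;> rfl
  have hu5 : ((![v, u] : Fin 2 → X) ∘ (Equiv.swap (0 : Fin 2) 1)) = ![u, v] := by
    funext i; fin_cases i <;> rfl
  rw [hw5, hu5] at h5
  rw [h1, h2, h3, h4, h5]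

/-- The key estimate for `α ≤ β`. -/
lemma key (u v : X) {α β : ℝ} (hα : α ∈ Set.Ioo (0 : ℝ) 1) (hβ : β ∈ Set.Ioo (0 : ℝ) 1)
    (hab : α ≤ β) :
    dist (Γ.γ ![α, 1 - α] ![u, v]) (Γ.γ ![β, 1 - β] ![u, v]) ≤ (β - α) * dist u v := by
  obtain ⟨hα0, hα1⟩ := hα
  obtain ⟨hβ0, hβ1⟩ := hβ
  have h1α : (0 : ℝ) < 1 - α := by linarith
  set t : ℝ := (β - α) / (1 - α) with ht
  have ht0 : 0 ≤ t := div_nonneg (by linarith) h1α.le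
  have ht1 : t < 1 := (div_lt_one h1α).2 (by linarith)
  have htβ : α + (1 - α) * t = β := by
    rw [ht]
    field_simp
    ring
  have hproj : Γ.γ ![(1 : ℝ), 0] ![u, v] = u := by
    apply Γ.γ_proj _ _ 0
    · intro i; fin_cases i <;> norm_num
    · simp [Fin.sum_univ_two]
    · simp
  have hνnn : ∀ i, 0 ≤ (![α, 1 - α] : Fin 2 → ℝ) i := by
    intro i; fin_cases i <;> simp <;> linarith
  have hνs : (∑ i, (![α, 1 - α] : Fin 2 → ℝ) i) = 1 := by simp [Fin.sum_univ_two]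
  have hw1nn : ∀ i, 0 ≤ (![(1 : ℝ), 0] : Fin 2 → ℝ) i := by
    intro i; fin_cases i <;> simp
  have hw1s : (∑ i, (![(1 : ℝ), 0] : Fin 2 → ℝ) i) = 1 := by simp [Fin.sum_univ_two]
  have hw2nn : ∀ i, 0 ≤ (![t, 1 - t] : Fin 2 → ℝ) i := by
    intro i; fin_cases i <;> simp <;> linarith
  have hw2s : (∑ i, (![t, 1 - t] : Fin 2 → ℝ) i) = 1 := by simp [Fin.sum_univ_two]
  have hnest := Γ.γ_nested ![α, 1 - α] ![(1 : ℝ), 0] ![t, 1 - t] ![u, v] ![u, v]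
    hνnn hνs hw1nn hw1s hw2nn hw2s
  rw [hproj] at hnest
  have happw : (Fin.append (fun i => (![α, 1 - α] : Fin 2 → ℝ) 0 * (![(1 : ℝ), 0] : Fin 2 → ℝ) i)
      (fun j => (![α, 1 - α] : Fin 2 → ℝ) 1 * (![t, 1 - t] : Fin 2 → ℝ) j) : Fin (2 + 2) → ℝ)
      = ![α * 1, α * 0, (1 - α) * t, (1 - α) * (1 - t)] := by
    funext i; fin_cases i <;> rfl
  have happu : (Fin.append (![u, v] : Fin 2 → X) (![u, v] : Fin 2 → X) : Fin (2 + 2) → X)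
      = ![u, v, u, v] := by
    funext i; fin_cases i <;> rfl
  rw [happw, happu] at hnest
  have h4nn : ∀ i, 0 ≤ (![α * 1, α * 0, (1 - α) * t, (1 - α) * (1 - t)] : Fin 4 → ℝ) i := by
    intro i; fin_cases i <;> simp <;> nlinarith
  have h4s : (∑ i, (![α * 1, α * 0, (1 - α) * t, (1 - α) * (1 - t)] : Fin 4 → ℝ) i) = 1 := by
    rw [Fin.sum_univ_four]; simp; ring
  have h4 := four_pt Γ _ h4nn h4s u v
  have hwfin : (![(![α * 1, α * 0, (1 - α) * t, (1 - α) * (1 - t)] : Fin 4 → ℝ) 0 +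
        (![α * 1, α * 0, (1 - α) * t, (1 - α) * (1 - t)] : Fin 4 → ℝ) 2,
        (![α * 1, α * 0, (1 - α) * t, (1 - α) * (1 - t)] : Fin 4 → ℝ) 1 +
        (![α * 1, α * 0, (1 - α) * t, (1 - α) * (1 - t)] : Fin 4 → ℝ) 3] : Fin 2 → ℝ)
      = ![β, 1 - β] := by
    funext i; fin_cases i <;> simp <;> linarith [htβ]
  rw [hwfin] at h4
  -- the identity
  have hident : Γ.γ ![α, 1 - α] ![u, Γ.γ ![t, 1 - t] ![u, v]] = Γ.γ ![β, 1 - β] ![u, v] := by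
    rw [hnest, h4]
  -- the distance estimate
  have hvv : Γ.γ ![t, 1 - t] ![v, v] = v := merge2 Γ t ht0 ht1.le v
  have hvt : dist v (Γ.γ ![t, 1 - t] ![u, v]) ≤ t * dist u v := by
    calc dist v (Γ.γ ![t, 1 - t] ![u, v])
        = dist (Γ.γ ![t, 1 - t] ![v, v]) (Γ.γ ![t, 1 - t] ![u, v]) := by rw [hvv]
      _
        ≤ ∑ i, (![t, 1 - t] : Fin 2 → ℝ) i *
            dist ((![v, v] : Fin 2 → X) i) ((![u, v] : Fin 2 → X) i) :=
          Γ.γ_lip _ _ _ hw2nn hw2s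
      _ = t * dist v u := by rw [Fin.sum_univ_two]; simp
      _ = t * dist u v := by rw [dist_comm]
  calc dist (Γ.γ ![α, 1 - α] ![u, v]) (Γ.γ ![β, 1 - β] ![u, v])
      = dist (Γ.γ ![α, 1 - α] ![u, v]) (Γ.γ ![α, 1 - α] ![u, Γ.γ ![t, 1 - t] ![u, v]]) := by
        rw [hident]
    _ ≤ ∑ i, (![α, 1 - α] : Fin 2 → ℝ) i *
          dist ((![u, v] : Fin 2 → X) i) ((![u, Γ.γ ![t, 1 - t] ![u, v]] : Fin 2 → X) i) :=
        Γ.γ_lip _ _ _ hνnn hνs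
    _ = (1 - α) * dist v (Γ.γ ![t, 1 - t] ![u, v]) := by rw [Fin.sum_univ_two]; simp
    _ ≤ (1 - α) * (t * dist u v) := by
        apply mul_le_mul_of_nonneg_left hvt h1α.le
    _ = (β - α) * dist u v := by
        rw [← mul_assoc]
        congr 1
        rw [ht]
        field_simp

end ConvexLikeAux

/-- In a metric space with a convex-like structure, two-point combinations are
Lipschitz in the weight: `d(γ_{α,1−α}(u,v), γ_{β,1−β}(u,v)) ≤ |β−α| d(u,v)`,
so `λ ↦ γ_{λ,1−λ}(u,v)` is Lipschitz on `(0,1)`. -/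
theorem stmt8 {X : Type} [MetricSpace X] (Γ : ConvexLike X) (u v : X) :
    (∀ α β : ℝ, α ∈ Set.Ioo (0 : ℝ) 1 → β ∈ Set.Ioo (0 : ℝ) 1 →
      dist (Γ.γ ![α, 1 - α] ![u, v]) (Γ.γ ![β, 1 - β] ![u, v]) ≤
        |β - α| * dist u v) ∧
    LipschitzOnWith (nndist u v) (fun t : ℝ => Γ.γ ![t, 1 - t] ![u, v])
      (Set.Ioo (0 : ℝ) 1) := by
  have main : ∀ α β : ℝ, α ∈ Set.Ioo (0 : ℝ) 1 → β ∈ Set.Ioo (0 : ℝ) 1 →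
      dist (Γ.γ ![α, 1 - α] ![u, v]) (Γ.γ ![β, 1 - β] ![u, v]) ≤ |β - α| * dist u v := by
    intro α β hα hβ
    rcases le_total α β with h | h
    · rw [abs_of_nonneg (by linarith)]
      exact ConvexLikeAux.key Γ u v hα hβ h
    · rw [abs_of_nonpos (by linarith), dist_comm]
      have := ConvexLikeAux.key Γ u v hβ hα h
      linarith
  refine ⟨main, ?_⟩
  rw [lipschitzOnWith_iff_dist_le_mul]
  intro α hα β hβ
  calc dist (Γ.γ ![α, 1 - α] ![u, v]) (Γ.γ ![β, 1 - β] ![u, v])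
      ≤ |β - α| * dist u v := main α β hα hβ
    _ = (nndist u v : ℝ) * dist α β := by
        rw [Real.dist_eq, coe_nndist, mul_comm, abs_sub_comm]
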